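/- Let F be a field, Λ = ∏_{j∈E}(x - α_j) with distinct α_j, and let E_p, E_p' be polynomials of degree < deg Λ with all values E_p(α_j), E_p'(α_j) nonzero. Suppose λ ∈ F[x] with gcd(λ, Λ) = 1 and ψ̂_1, ψ̂_2 ∈ F[x] satisfy λ E_p ≡ ψ̂_1, λ E_p^2 ≡ ψ̂_2 (mod Λ) and also λ E_p' ≡ ψ̂_1, λ E_p'^2 ≡ ψ̂_2 (mod Λ). Then E_p = E_p'. -/

import Mathlib

open Polynomial

/-- When `gcd(λ, Λ) = 1`, the pair of congruences `λEₚ ≡ ψ̂₁`, `λEₚ² ≡ ψ̂₂ (mod Λ)`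
determines the interpolant `Eₚ` uniquely. -/
theorem interpolant_unique_of_coprime {F : Type*} [Field F] {m : ℕ}
    (α : Fin m → F) (hα : Function.Injective α)
    (Ep Ep' : F[X]) (hd : Ep.degree < m) (hd' : Ep'.degree < m)
    (hv : ∀ j, Ep.eval (α j) ≠ 0) (hv' : ∀ j, Ep'.eval (α j) ≠ 0)
    (lam ψ1 ψ2 : F[X]) (hcop : IsCoprime lam (∏ j, (X - C (α j))))
    (h1 : (∏ j, (X - C (α j))) ∣ lam * Ep - ψ1)
    (h2 : (∏ j, (X - C (α j))) ∣ lam * Ep ^ 2 - ψ2)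
    (h1' : (∏ j, (X - C (α j))) ∣ lam * Ep' - ψ1)
    (h2' : (∏ j, (X - C (α j))) ∣ lam * Ep' ^ 2 - ψ2) :
    Ep = Ep' := by
  set Λ : F[X] := ∏ j, (X - C (α j)) with hΛ
  have hdvd : Λ ∣ lam * (Ep - Ep') := by
    have := dvd_sub h1 h1'
    simpa [mul_sub] using this
  have hdvd2 : Λ ∣ Ep - Ep' := (hcop.symm.dvd_of_dvd_mul_left hdvd)
  have hΛdeg : Λ.degree = (m : WithBot ℕ) := by
    rw [hΛ, degree_prod]
    simp [degree_X_sub_C]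
  have hz : Ep - Ep' = 0 := by
    rcases eq_or_ne (Ep - Ep') 0 with h | h
    · exact h
    · exact eq_zero_of_dvd_of_degree_lt hdvd2 (by
        rw [hΛdeg]
        calc (Ep - Ep').degree ≤ max Ep.degree Ep'.degree := degree_sub_le _ _
          _ < (m : WithBot ℕ) := max_lt hd hd')
  exact sub_eq_zero.mp hz
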